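/- arXiv:1606.05732 — 3 statements merged into one kernel-verified Lean document; each statement's English description precedes it below -/
import Mathlib

section
/- Let Z be a real-valued random variable and E an event with Pr[E] ≥ 1/2. Let ε = E[(Z − 1)^2]. Then |E[Z] − E[Z | E]| ≤ 2(1 + E[Z])·Pr[E^c] + 2·√(ε·Pr[E^c]). -/
open MeasureTheory


set_option maxHeartbeats 1000000 in
lemma key_ineq (p q a b s : ℝ) (hp : 1/2 ≤ p) (hpq : p + q = 1) (hq : 0 ≤ q)
    (hs : 0 ≤ s) (h2 : a^2*q + b^2*p ≤ s^2*p) :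
    |b*p - a*q| ≤ 4*(p*q) + 2*(a+b)*(p*q) + 2*s*p := by
  have hq1 : q = 1 - p := by linarith
  subst hq1
  have hp0 : 0 < p := by linarith
  have hp2 : (0:ℝ) ≤ 2*p - 1 := by linarith
  have hq0 : (0:ℝ) ≤ 1 - p := hq
  have hsp : 0 ≤ 2*s*p := by positivity
  rw [abs_le]
  set A := |a| with hA
  set B := |b| with hB
  have hA0 : 0 ≤ A := abs_nonneg a
  have hB0 : 0 ≤ B := abs_nonneg b
  have haA : a ≤ A := le_abs_self a
  have haA' : -A ≤ a := neg_abs_le a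
  have hbB : b ≤ B := le_abs_self b
  have hbB' : -B ≤ b := neg_abs_le b
  have ha2 : a^2 = A^2 := (sq_abs a).symm
  have hb2 : b^2 = B^2 := (sq_abs b).symm
  have hX : (0:ℝ) ≤ (1-p)*A^2 + p*B^2 := by positivity
  have h4p : (0:ℝ) ≤ 4*p^2 - 1 := by nlinarith
  have hcs : (4*p*(1-p)+1) * ((1-p)*A^2 + p*B^2) ≤ 4*p*((1-p)*A^2 + p*B^2) := by
    nlinarith [mul_nonneg h4p hX]
  have h3 : 4*p*((1-p)*A^2 + p*B^2) ≤ (2*s*p)^2 := by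
    nlinarith [mul_le_mul_of_nonneg_left h2 (by positivity : (0:ℝ) ≤ 4*p)]
  constructor
  · rcases le_or_gt (a*(1-p) - b*p) (4*(p*(1-p)) + 2*(a+b)*(p*(1-p))) with h | h
    · nlinarith
    · set R := a*(1-p) - b*p - 4*(p*(1-p)) - 2*(a+b)*(p*(1-p)) with hR
      have hRpos : 0 < R := by rw [hR]; linarith
      set T := A*((1-p)*(2*p-1)) + B*(p*(1+2*(1-p))) with hT
      have hRT : R ≤ T := by
        rw [hR, hT]
        nlinarith [mul_nonneg (mul_nonneg hq0 hp2) (by linarith : 0 ≤ A + a),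
          mul_nonneg (mul_nonneg hp0.le (by linarith : (0:ℝ) ≤ 1+2*(1-p))) (by linarith : 0 ≤ B + b),
          mul_nonneg hp0.le hq0]
      have hT2 : T^2 ≤ (4*p*(1-p)+1) * ((1-p)*A^2 + p*B^2) := by
        rw [hT]
        nlinarith [mul_nonneg (mul_nonneg hp0.le hq0) (sq_nonneg ((1+2*(1-p))*A - (2*p-1)*B))]
      have h1 : R^2 ≤ T^2 := pow_le_pow_left₀ hRpos.le hRT 2
      have hsq : R^2 ≤ (2*s*p)^2 := by linarith
      have := le_of_pow_le_pow_left₀ two_ne_zero hsp hsq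
      rw [hR] at this; linarith
  · rcases le_or_gt (b*p - a*(1-p)) (4*(p*(1-p)) + 2*(a+b)*(p*(1-p))) with h | h
    · nlinarith
    · set R := b*p - a*(1-p) - 4*(p*(1-p)) - 2*(a+b)*(p*(1-p)) with hR
      have hRpos : 0 < R := by rw [hR]; linarith
      set T := A*((1-p)*(1+2*p)) + B*(p*(2*p-1)) with hT
      have hRT : R ≤ T := by
        rw [hR, hT]
        nlinarith [mul_nonneg (mul_nonneg hq0 (by linarith : (0:ℝ) ≤ 1+2*p)) (by linarith : 0 ≤ A + a),
          mul_nonneg (mul_nonneg hp0.le hp2) (by linarith : 0 ≤ B - b),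
          mul_nonneg hp0.le hq0]
      have hT2 : T^2 ≤ (4*p*(1-p)+1) * ((1-p)*A^2 + p*B^2) := by
        rw [hT]
        nlinarith [mul_nonneg (mul_nonneg hp0.le hq0) (sq_nonneg ((2*p-1)*A - (1+2*p)*B))]
      have h1 : R^2 ≤ T^2 := pow_le_pow_left₀ hRpos.le hRT 2
      have hsq : R^2 ≤ (2*s*p)^2 := by linarith
      have := le_of_pow_le_pow_left₀ two_ne_zero hsp hsq
      rw [hR] at this; linarith
open MeasureTheory

lemma cs_aux {Ω : Type*} [MeasurableSpace Ω] (μ : Measure Ω) [IsFiniteMeasure μ]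
    (f : Ω → ℝ) (h1 : Integrable f μ) (h2 : Integrable (fun ω => (f ω) ^ 2) μ) :
    (∫ ω, f ω ∂μ)^2 ≤ (∫ ω, (f ω) ^ 2 ∂μ) * (μ Set.univ).toReal := by
  by_cases hm : μ Set.univ = 0
  · have : μ = 0 := Measure.measure_univ_eq_zero.mp hm
    subst this
    simp
  · set m := (μ Set.univ).toReal with hmdef
    set I := ∫ ω, f ω ∂μ with hIdef
    set S := ∫ ω, (f ω) ^ 2 ∂μ with hSdef
    have hm0 : 0 < m := ENNReal.toReal_pos hm (measure_ne_top μ _)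
    have h0 : 0 ≤ ∫ ω, (m * f ω - I)^2 ∂μ := integral_nonneg fun ω => sq_nonneg _
    have hi1 : Integrable (fun ω => m^2 * (f ω)^2 - (2*m*I) * f ω) μ := by
      exact (h2.const_mul (m^2)).sub (h1.const_mul (2*m*I))
    have hexp : ∫ ω, (m * f ω - I)^2 ∂μ = m^2 * S - (2*m*I) * I + I^2 * m := by
      have heq : (fun ω => (m * f ω - I)^2)
          = fun ω => (m^2 * (f ω)^2 - (2*m*I) * f ω) + I^2 := by
        funext ω; ring
      rw [heq, integral_add hi1 (integrable_const _),
        integral_sub (h2.const_mul _) (h1.const_mul _), integral_const_mul,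
        integral_const_mul, integral_const]
      simp [hmdef, smul_eq_mul, mul_comm, Measure.real]; rfl
    rw [hexp] at h0
    nlinarith [hm0, sq_nonneg I]


/-- Conditioning lemma: if `Pr[E] ≥ 1/2` and `ε = E[(Z-1)²]`, then
`|E[Z] - E[Z | E]| ≤ 2(1 + E[Z])·Pr[Eᶜ] + 2√(ε·Pr[Eᶜ])`. -/
theorem conditioning_bound {Ω : Type*} [MeasurableSpace Ω] (μ : Measure Ω)
    [IsProbabilityMeasure μ] (Z : Ω → ℝ) (E : Set Ω) (hE : MeasurableSet E)
    (hZ1 : Integrable Z μ) (hZ2 : Integrable (fun ω => (Z ω - 1) ^ 2) μ)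
    (hPrE : 1 / 2 ≤ (μ E).toReal) :
    |(∫ ω, Z ω ∂μ) - ((μ E).toReal)⁻¹ * ∫ ω in E, Z ω ∂μ|
      ≤ 2 * (1 + ∫ ω, Z ω ∂μ) * (μ Eᶜ).toReal
        + 2 * Real.sqrt ((∫ ω, (Z ω - 1) ^ 2 ∂μ) * (μ Eᶜ).toReal) := by
  set p := (μ E).toReal with hpdef
  have hp0 : 0 < p := lt_of_lt_of_le (by norm_num) hPrE
  have hsum : μ E + μ Eᶜ = 1 := by rw [measure_add_measure_compl hE, measure_univ]
  have hqe : (μ Eᶜ).toReal = 1 - p := by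
    have := congrArg ENNReal.toReal hsum
    rw [ENNReal.toReal_add (measure_ne_top μ E) (measure_ne_top μ Eᶜ),
      ENNReal.toReal_one] at this
    linarith [this]
  rw [hqe]
  have hq0 : (0:ℝ) ≤ 1 - p := by rw [← hqe]; exact ENNReal.toReal_nonneg
  have hf1 : Integrable (fun ω => Z ω - 1) μ := hZ1.sub (integrable_const 1)
  set a := ∫ ω in E, (Z ω - 1) ∂μ with hadef
  set b := ∫ ω in Eᶜ, (Z ω - 1) ∂μ with hbdef
  set ε := ∫ ω, (Z ω - 1)^2 ∂μ with hεdef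
  set S1 := ∫ ω in E, (Z ω - 1)^2 ∂μ with hS1def
  set S2 := ∫ ω in Eᶜ, (Z ω - 1)^2 ∂μ with hS2def
  have hsplit2 : S1 + S2 = ε := integral_add_compl hE hZ2
  have hconstE : ∫ _ω in E, (1:ℝ) ∂μ = p := by
    rw [setIntegral_const]; simp [hpdef]; rfl
  have hconstEc : ∫ _ω in Eᶜ, (1:ℝ) ∂μ = 1 - p := by
    rw [setIntegral_const]; simp [hqe]; exact hqe
  have hIE : ∫ ω in E, Z ω ∂μ = a + p := by
    rw [hadef, integral_sub hZ1.restrict (integrable_const 1), hconstE]; ring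
  have hIC : ∫ ω in Eᶜ, Z ω ∂μ = b + (1 - p) := by
    rw [hbdef, integral_sub hZ1.restrict (integrable_const 1), hconstEc]; ring
  have hItot : ∫ ω, Z ω ∂μ = (a + p) + (b + (1 - p)) := by
    rw [← integral_add_compl hE hZ1, hIE, hIC]
  -- Cauchy-Schwarz on each piece
  have hCSa : a^2 ≤ S1 * p := by
    have := cs_aux (μ.restrict E) (fun ω => Z ω - 1) hf1.restrict hZ2.restrict
    rwa [Measure.restrict_apply_univ] at this
  have hCSb : b^2 ≤ S2 * (1 - p) := by
    have := cs_aux (μ.restrict Eᶜ) (fun ω => Z ω - 1) hf1.restrict hZ2.restrict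
    rwa [Measure.restrict_apply_univ, hqe] at this
  have hS1nn : 0 ≤ S1 := integral_nonneg fun ω => sq_nonneg _
  have hS2nn : 0 ≤ S2 := integral_nonneg fun ω => sq_nonneg _
  have hε0 : 0 ≤ ε := integral_nonneg fun ω => sq_nonneg _
  set s := Real.sqrt (ε * (1 - p)) with hsdef
  have hs0 : 0 ≤ s := Real.sqrt_nonneg _
  have hs2 : s^2 = ε * (1 - p) := Real.sq_sqrt (by positivity)
  have h2 : a^2*(1-p) + b^2*p ≤ s^2*p := by
    rw [hs2]
    have e1 : a^2*(1-p) ≤ S1 * p * (1-p) := mul_le_mul_of_nonneg_right hCSa hq0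
    have e2 : b^2*p ≤ S2 * (1-p) * p := mul_le_mul_of_nonneg_right hCSb hp0.le
    have e3 : S1 * p * (1-p) + S2 * (1-p) * p = ε * (1-p) * p := by
      rw [← hsplit2]; ring
    linarith
  have hkey := key_ineq p (1-p) a b s hPrE (by ring) hq0 hs0 h2
  have hEq : (∫ ω, Z ω ∂μ) - p⁻¹ * ∫ ω in E, Z ω ∂μ = (b*p - a*(1-p))/p := by
    rw [hItot, hIE]
    field_simp
    ring
  rw [hEq, abs_div, abs_of_pos hp0, div_le_iff₀ hp0]
  calc |b*p - a*(1-p)| ≤ 4*(p*(1-p)) + 2*(a+b)*(p*(1-p)) + 2*s*p := hkey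
    _ = (2 * (1 + ((a + p) + (b + (1 - p)))) * (1-p) + 2*s) * p := by ring
    _ = (2 * (1 + ∫ ω, Z ω ∂μ) * (1-p) + 2*s) * p := by rw [← hItot]
end

section
/- Let S be a B×n CountSketch matrix and U ∈ R^{n×d} with orthonormal columns, M = U^T S^T S U. Then E_S[‖M − I‖_F^2] ≤ 2d^2/B. -/
open Matrix

/-- The CountSketch matrix determined by the row choices `r` and the sign choices `s`:
column `j` has its unique nonzero entry `±1` in row `r j`. -/
def countSketch (B n : ℕ) (r : Fin n → Fin B) (s : Fin n → Bool) :
    Matrix (Fin B) (Fin n) ℝ :=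
  Matrix.of fun i j => if r j = i then (if s j then 1 else -1) else 0

/-- The squared Frobenius norm of a real matrix. -/
def frobNormSq {d : ℕ} (A : Matrix (Fin d) (Fin d) ℝ) : ℝ :=
  ∑ i, ∑ j, (A i j) ^ 2

noncomputable def CSaux.sg (x : Bool) : ℝ := if x then 1 else -1

namespace CSaux

open Finset

lemma sg_mul_self (x : Bool) : sg x * sg x = 1 := by cases x <;> simp [sg]
lemma sg_not (x : Bool) : sg (!x) = - sg x := by cases x <;> simp [sg]

variable {B n d : ℕ}

/-- shift equiv on functions -/
def shiftEquiv [NeZero B] (a : Fin n) (k : Fin B) : (Fin n → Fin B) ≃ (Fin n → Fin B) where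
  toFun r := Function.update r a (r a + k)
  invFun r := Function.update r a (r a - k)
  left_inv r := by
    simp [Function.update_idem, Function.update_self, add_sub_cancel_right,
      Function.update_eq_self]
  right_inv r := by
    simp [Function.update_idem, Function.update_self, sub_add_cancel,
      Function.update_eq_self]

lemma count_shift [NeZero B] (a b : Fin n) (hab : a ≠ b) (k : Fin B) :
    (∑ r : Fin n → Fin B, if r a = r b then (1:ℝ) else 0)
      = ∑ r : Fin n → Fin B, if r a = r b + k then (1:ℝ) else 0 := by
  rw [← Equiv.sum_comp (shiftEquiv a k)
    (fun r => if r a = r b + k then (1:ℝ) else 0)]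
  refine Finset.sum_congr rfl fun r _ => ?_
  have h1 : (shiftEquiv a k r) a = r a + k := by simp [shiftEquiv]
  have h2 : (shiftEquiv a k r) b = r b := by
    simp [shiftEquiv, Function.update_of_ne (Ne.symm hab)]
  rw [h1, h2]
  congr 1
  simp [add_left_inj]

lemma count_eq [NeZero B] (a b : Fin n) (hab : a ≠ b) :
    (∑ r : Fin n → Fin B, if r a = r b then (1:ℝ) else 0) = (B:ℝ)^n / B := by
  have hB0 : (B:ℝ) ≠ 0 := Nat.cast_ne_zero.2 (NeZero.ne B)
  have key : (B:ℝ) * (∑ r : Fin n → Fin B, if r a = r b then (1:ℝ) else 0) = (B:ℝ)^n := by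
    calc (B:ℝ) * (∑ r : Fin n → Fin B, if r a = r b then (1:ℝ) else 0)
        = ∑ _k : Fin B, (∑ r : Fin n → Fin B, if r a = r b then (1:ℝ) else 0) := by
          rw [Finset.sum_const, Finset.card_univ, Fintype.card_fin, nsmul_eq_mul]
      _ = ∑ k : Fin B, ∑ r : Fin n → Fin B, if r a = r b + k then (1:ℝ) else 0 :=
          Finset.sum_congr rfl fun k _ => count_shift a b hab k
      _ = ∑ r : Fin n → Fin B, ∑ k : Fin B, if r a = r b + k then (1:ℝ) else 0 :=
          Finset.sum_comm
      _ = ∑ _r : Fin n → Fin B, 1 := by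
          refine Finset.sum_congr rfl fun r _ => ?_
          rw [Finset.sum_eq_single (r a - r b)]
          · rw [if_pos]; rw [add_sub_cancel]
          · intro k _ hk
            rw [if_neg]
            intro h
            apply hk
            rw [h]; rw [add_sub_cancel_left]
          · intro h; exact absurd (Finset.mem_univ _) h
      _ = (B:ℝ)^n := by
          rw [Finset.sum_const, Finset.card_univ, Fintype.card_fun, Fintype.card_fin,
            Fintype.card_fin, nsmul_eq_mul, mul_one, Nat.cast_pow]
  rw [eq_div_iff hB0]
  linarith [key]

lemma flip_invol (i0 : Fin n) :
    Function.Involutive (fun s : Fin n → Bool => Function.update s i0 (!(s i0))) := by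
  intro s
  funext j
  rcases eq_or_ne j i0 with rfl | h
  · simp
  · simp [Function.update_of_ne h]

lemma sum_flip_zero (i0 : Fin n) (g : (Fin n → Bool) → ℝ)
    (h : ∀ s, g (Function.update s i0 (!(s i0))) = - g s) :
    ∑ s, g s = 0 := by
  have h2 : ∑ s, g s = ∑ s, g ((flip_invol i0).toPerm _ s) :=
    (Equiv.sum_comp ((flip_invol i0).toPerm _) g).symm
  simp only [Function.Involutive.coe_toPerm] at h2
  simp only [h] at h2
  rw [Finset.sum_neg_distrib] at h2
  linarith

lemma sign_sum_zero (a b a' b' : Fin n) (hab : a ≠ b)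
    (hm : ¬ ((a' = a ∧ b' = b) ∨ (a' = b ∧ b' = a))) :
    ∑ s : Fin n → Bool, sg (s a) * sg (s b) * sg (s a') * sg (s b') = 0 := by
  push_neg at hm
  by_cases h1 : a' = a
  · have hb' : b' ≠ b := hm.1 h1
    apply sum_flip_zero b
    intro s
    rw [Function.update_of_ne hab, Function.update_self,
      Function.update_of_ne (h1.trans_ne hab), Function.update_of_ne hb', sg_not]
    ring
  by_cases h2 : b' = a
  · have ha' : a' ≠ b := fun h => (hm.2 h) h2
    apply sum_flip_zero b
    intro s
    rw [Function.update_of_ne hab, Function.update_self,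
      Function.update_of_ne ha', Function.update_of_ne (h2.trans_ne hab), sg_not]
    ring
  · apply sum_flip_zero a
    intro s
    rw [Function.update_self, Function.update_of_ne (Ne.symm hab),
      Function.update_of_ne h1, Function.update_of_ne h2, sg_not]
    ring

noncomputable def phi (r : Fin n → Fin B) (s : Fin n → Bool) (a b : Fin n) : ℝ :=
  if a = b then 0 else if r a = r b then sg (s a) * sg (s b) else 0

lemma tuple_sum [NeZero B] (a b a' b' : Fin n) :
    (∑ r : Fin n → Fin B, ∑ s : Fin n → Bool, phi r s a b * phi r s a' b')
      = if a ≠ b ∧ ((a' = a ∧ b' = b) ∨ (a' = b ∧ b' = a))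
        then (B:ℝ)^n / B * 2^n else 0 := by
  by_cases hab : a = b
  · simp [phi, hab]
  by_cases hab' : a' = b'
  · rw [if_neg]
    · simp [phi, hab']
    · rintro ⟨h1, (⟨rfl, rfl⟩ | ⟨rfl, rfl⟩)⟩
      · exact h1 hab'
      · exact h1 hab'.symm
  by_cases hm : (a' = a ∧ b' = b) ∨ (a' = b ∧ b' = a)
  · rw [if_pos ⟨hab, hm⟩]
    have key : ∀ (r : Fin n → Fin B) (s : Fin n → Bool),
        phi r s a b * phi r s a' b' = if r a = r b then 1 else 0 := by
      intro r s
      simp only [phi, if_neg hab, if_neg hab']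
      rcases hm with ⟨h1, h2⟩ | ⟨h1, h2⟩
      · rw [h1, h2]
        split_ifs with h
        · linear_combination (sg (s b) * sg (s b)) * sg_mul_self (s a) + sg_mul_self (s b)
        · ring
      · rw [h1, h2]
        by_cases h : r a = r b
        · rw [if_pos h, if_pos h.symm, if_pos h]
          linear_combination (sg (s a) * sg (s a)) * sg_mul_self (s b) + sg_mul_self (s a)
        · rw [if_neg h, if_neg (fun hh => h hh.symm), if_neg h, zero_mul]
    calc (∑ r : Fin n → Fin B, ∑ s : Fin n → Bool, phi r s a b * phi r s a' b')
        = ∑ r : Fin n → Fin B, ∑ _s : Fin n → Bool, (if r a = r b then (1:ℝ) else 0) :=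
          Finset.sum_congr rfl fun r _ => Finset.sum_congr rfl fun s _ => key r s
      _ = ∑ r : Fin n → Fin B, (2:ℝ)^n * (if r a = r b then (1:ℝ) else 0) := by
          refine Finset.sum_congr rfl fun r _ => ?_
          rw [Finset.sum_const, Finset.card_univ, Fintype.card_fun, Fintype.card_fin,
            Fintype.card_bool, nsmul_eq_mul, Nat.cast_pow]
          norm_num
      _ = (2:ℝ)^n * ∑ r : Fin n → Fin B, (if r a = r b then (1:ℝ) else 0) := by
          rw [Finset.mul_sum]
      _ = (B:ℝ)^n / B * 2^n := by rw [count_eq a b hab]; ring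
  · rw [if_neg (fun h => hm h.2)]
    refine Finset.sum_eq_zero fun r _ => ?_
    have key : ∀ s : Fin n → Bool, phi r s a b * phi r s a' b'
        = if r a = r b ∧ r a' = r b' then sg (s a) * sg (s b) * sg (s a') * sg (s b') else 0 := by
      intro s
      simp only [phi, if_neg hab, if_neg hab']
      split_ifs with h1 h2 h2 <;> simp_all <;> ring
    rw [Finset.sum_congr rfl fun s _ => key s]
    split_ifs with h
    · exact sign_sum_zero a b a' b' hab hm
    · exact Finset.sum_const_zero

noncomputable def phiM (r : Fin n → Fin B) (s : Fin n → Bool) : Matrix (Fin n) (Fin n) ℝ :=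
  Matrix.of fun a b => phi r s a b

lemma csTcs (r : Fin n → Fin B) (s : Fin n → Bool) :
    (countSketch B n r s)ᵀ * countSketch B n r s = phiM r s + 1 := by
  ext a b
  rw [Matrix.mul_apply]
  have hsum : ∀ i : Fin B,
      (countSketch B n r s)ᵀ a i * countSketch B n r s i b
        = if r a = i then (if r b = i then sg (s a) * sg (s b) else 0) else 0 := by
    intro i
    simp only [countSketch, transpose_apply, Matrix.of_apply, sg]
    split_ifs <;> ring
  rw [Finset.sum_congr rfl fun i _ => hsum i]
  rw [Finset.sum_ite_eq univ (r a) (fun i => if r b = i then sg (s a) * sg (s b) else 0)]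
  simp only [Finset.mem_univ, if_true]
  by_cases hab : a = b
  · subst hab
    simp [phiM, phi, Matrix.add_apply, Matrix.one_apply, sg_mul_self]
  · simp only [phiM, phi, Matrix.add_apply, Matrix.of_apply, Matrix.one_apply,
      if_neg hab, add_zero]
    by_cases h : r a = r b
    · rw [if_pos h.symm, if_pos h]
    · rw [if_neg (fun hh => h hh.symm), if_neg h]

lemma key_matrix (r : Fin n → Fin B) (s : Fin n → Bool)
    (U : Matrix (Fin n) (Fin d) ℝ) (hU : Uᵀ * U = 1) :
    Uᵀ * (countSketch B n r s)ᵀ * countSketch B n r s * U - 1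
      = Uᵀ * phiM r s * U := by
  have h1 : Uᵀ * (countSketch B n r s)ᵀ * countSketch B n r s * U
      = Uᵀ * ((countSketch B n r s)ᵀ * countSketch B n r s) * U := by
    rw [Matrix.mul_assoc Uᵀ]
  rw [h1, csTcs, Matrix.mul_add, Matrix.add_mul, Matrix.mul_one, hU, add_sub_cancel_right]

lemma frob_trace (A : Matrix (Fin d) (Fin d) ℝ) : frobNormSq A = trace (A * Aᵀ) := by
  unfold frobNormSq
  rw [Matrix.trace]
  simp only [Matrix.diag, Matrix.mul_apply, Matrix.transpose_apply]
  refine Finset.sum_congr rfl fun i _ => Finset.sum_congr rfl fun j _ => ?_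
  ring

lemma phiM_symm (r : Fin n → Fin B) (s : Fin n → Bool) : (phiM r s)ᵀ = phiM r s := by
  ext a b
  simp only [transpose_apply, phiM, phi, Matrix.of_apply]
  by_cases hab : a = b
  · simp [hab]
  · rw [if_neg hab, if_neg (fun h => hab h.symm)]
    by_cases h : r a = r b
    · rw [if_pos h, if_pos h.symm, mul_comm]
    · rw [if_neg h, if_neg (fun hh => h hh.symm)]

lemma trace_conj (U : Matrix (Fin n) (Fin d) ℝ) (P : Matrix (Fin n) (Fin n) ℝ)
    (hP : Pᵀ = P) :
    trace ((Uᵀ * P * U) * (Uᵀ * P * U)ᵀ) = trace (P * (U * Uᵀ) * P * (U * Uᵀ)) := by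
  rw [Matrix.transpose_mul, Matrix.transpose_mul, Matrix.transpose_transpose, hP]
  rw [show Uᵀ * P * U * (Uᵀ * (P * U)) = Uᵀ * (P * (U * (Uᵀ * (P * U)))) by
    simp only [Matrix.mul_assoc]]
  rw [Matrix.trace_mul_comm]
  simp only [Matrix.mul_assoc]

lemma trace_expand (P G : Matrix (Fin n) (Fin n) ℝ) :
    trace (P * G * P * G)
      = ∑ a, ∑ b', ∑ a', ∑ b, P a b * G b a' * P a' b' * G b' a := by
  rw [Matrix.trace]
  simp only [Matrix.diag, Matrix.mul_apply, Finset.sum_mul]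

lemma sum4_reorder {α : Type*} [Fintype α] {M : Type*} [AddCommMonoid M]
    (f : α → α → α → α → M) :
    (∑ a, ∑ b', ∑ a', ∑ b, f a b' a' b) = ∑ a, ∑ b, ∑ a', ∑ b', f a b' a' b := by
  refine Finset.sum_congr rfl fun a _ => ?_
  rw [Finset.sum_comm]
  rw [show (∑ a', ∑ b', ∑ b, f a b' a' b) = ∑ a', ∑ b, ∑ b', f a b' a' b from
    Finset.sum_congr rfl fun a' _ => Finset.sum_comm]
  exact Finset.sum_comm

lemma double_delta {α : Type*} [Fintype α] [DecidableEq α] (w : α → α → ℝ) (x y : α) (K : ℝ) :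
    (∑ a' : α, ∑ b' : α, (if a' = x ∧ b' = y then K else 0) * w a' b') = K * w x y := by
  rw [Finset.sum_eq_single x]
  · rw [Finset.sum_eq_single y]
    · simp
    · intro b' _ h; simp [h]
    · simp
  · intro a' _ h
    refine Finset.sum_eq_zero fun b' _ => ?_
    simp [h]
  · simp

lemma eval_fourfold {α : Type*} [Fintype α] [DecidableEq α] (G : Matrix α α ℝ) (K : ℝ) :
    (∑ a, ∑ b', ∑ a', ∑ b : α,
        (if a ≠ b ∧ ((a' = a ∧ b' = b) ∨ (a' = b ∧ b' = a)) then K else 0)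
          * (G b a' * G b' a))
      = ∑ a, ∑ b : α, (if a = b then 0 else K * (G b a * G b a + G b b * G a a)) := by
  rw [sum4_reorder (fun a b' a' b =>
    (if a ≠ b ∧ ((a' = a ∧ b' = b) ∨ (a' = b ∧ b' = a)) then K else 0) * (G b a' * G b' a))]
  refine Finset.sum_congr rfl fun a _ => Finset.sum_congr rfl fun b _ => ?_
  by_cases hab : a = b
  · simp [hab]
  · rw [if_neg hab]
    have hpt : ∀ a' b' : α,
        (if a ≠ b ∧ ((a' = a ∧ b' = b) ∨ (a' = b ∧ b' = a)) then K else 0)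
          = (if a' = a ∧ b' = b then K else 0) + (if a' = b ∧ b' = a then K else 0) := by
      intro a' b'
      by_cases h1 : a' = a ∧ b' = b
      · have h2 : ¬(a' = b ∧ b' = a) := fun h2 => hab (h1.1.symm.trans h2.1)
        rw [if_pos ⟨hab, Or.inl h1⟩, if_pos h1, if_neg h2, add_zero]
      · by_cases h2 : a' = b ∧ b' = a
        · rw [if_pos ⟨hab, Or.inr h2⟩, if_neg h1, if_pos h2, zero_add]
        · rw [if_neg, if_neg h1, if_neg h2, add_zero]
          rintro ⟨-, h | h⟩
          exacts [h1 h, h2 h]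
    calc (∑ a', ∑ b' : α,
            (if a ≠ b ∧ ((a' = a ∧ b' = b) ∨ (a' = b ∧ b' = a)) then K else 0)
              * (G b a' * G b' a))
        = (∑ a', ∑ b' : α, (if a' = a ∧ b' = b then K else 0) * (G b a' * G b' a))
            + (∑ a', ∑ b' : α, (if a' = b ∧ b' = a then K else 0) * (G b a' * G b' a)) := by
          rw [← Finset.sum_add_distrib]
          refine Finset.sum_congr rfl fun a' _ => ?_
          rw [← Finset.sum_add_distrib]
          refine Finset.sum_congr rfl fun b' _ => ?_
          rw [hpt a' b', add_mul]
      _ = K * (G b a * G b a) + K * (G b b * G a a) := by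
          rw [double_delta (fun a' b' => G b a' * G b' a) a b K,
            double_delta (fun a' b' => G b a' * G b' a) b a K]
      _ = K * (G b a * G b a + G b b * G a a) := by ring

end CSaux

open CSaux Finset

/-- For a uniformly random CountSketch matrix `S` and `U` with orthonormal columns,
with `M = Uᵀ Sᵀ S U`, one has `E_S[‖M - I‖_F²] ≤ 2d²/B`. -/
theorem countSketch_expect_frob_sq_le (B n d : ℕ) (hB : 0 < B)
    (U : Matrix (Fin n) (Fin d) ℝ) (hU : Uᵀ * U = 1) :
    (∑ r : Fin n → Fin B, ∑ s : Fin n → Bool,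
        frobNormSq (Uᵀ * (countSketch B n r s)ᵀ * countSketch B n r s * U
          - (1 : Matrix (Fin d) (Fin d) ℝ)))
      / ((B : ℝ) ^ n * 2 ^ n) ≤ 2 * (d : ℝ) ^ 2 / B := by
  haveI : NeZero B := ⟨hB.ne'⟩
  have hB0 : (0:ℝ) < B := by exact_mod_cast hB
  set G : Matrix (Fin n) (Fin n) ℝ := U * Uᵀ with hG
  set K : ℝ := (B:ℝ)^n / B * 2^n with hK
  -- G facts
  have hGsymm : Gᵀ = G := by rw [hG, Matrix.transpose_mul, Matrix.transpose_transpose]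
  have hGs : ∀ x y, G x y = G y x := by
    intro x y
    conv_lhs => rw [← hGsymm]
    rfl
  have htrG : trace G = (d:ℝ) := by
    rw [hG, Matrix.trace_mul_comm, hU, Matrix.trace_one]
    simp
  have hGG : G * G = G := by
    rw [hG, Matrix.mul_assoc, ← Matrix.mul_assoc Uᵀ U Uᵀ, hU, Matrix.one_mul]
  have hdiag : ∀ x, 0 ≤ G x x := by
    intro x
    rw [hG, Matrix.mul_apply]
    exact Finset.sum_nonneg fun i _ => by
      rw [Matrix.transpose_apply]; exact mul_self_nonneg _
  -- numerator computation
  have hnum : (∑ r : Fin n → Fin B, ∑ s : Fin n → Bool,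
        frobNormSq (Uᵀ * (countSketch B n r s)ᵀ * countSketch B n r s * U
          - (1 : Matrix (Fin d) (Fin d) ℝ)))
      = ∑ a, ∑ b : Fin n, (if a = b then 0 else K * (G b a * G b a + G b b * G a a)) := by
    have step1 : ∀ (r : Fin n → Fin B) (s : Fin n → Bool),
        frobNormSq (Uᵀ * (countSketch B n r s)ᵀ * countSketch B n r s * U
          - (1 : Matrix (Fin d) (Fin d) ℝ))
        = ∑ a, ∑ b', ∑ a', ∑ b, phi r s a b * G b a' * phi r s a' b' * G b' a := by
      intro r s
      rw [key_matrix r s U hU, frob_trace, trace_conj U (phiM r s) (phiM_symm r s),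
        ← hG, trace_expand]
      rfl
    calc (∑ r : Fin n → Fin B, ∑ s : Fin n → Bool,
          frobNormSq (Uᵀ * (countSketch B n r s)ᵀ * countSketch B n r s * U
            - (1 : Matrix (Fin d) (Fin d) ℝ)))
        = ∑ r : Fin n → Fin B, ∑ s : Fin n → Bool,
            ∑ a, ∑ b', ∑ a', ∑ b, phi r s a b * G b a' * phi r s a' b' * G b' a :=
          Finset.sum_congr rfl fun r _ => Finset.sum_congr rfl fun s _ => step1 r s
      _ = ∑ r : Fin n → Fin B, ∑ s : Fin n → Bool,
            ∑ q : Fin n × Fin n × Fin n × Fin n,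
              phi r s q.1 q.2.2.2 * G q.2.2.2 q.2.2.1 * phi r s q.2.2.1 q.2.1
                * G q.2.1 q.1 := by
          refine Finset.sum_congr rfl fun r _ => Finset.sum_congr rfl fun s _ => ?_
          rw [Fintype.sum_prod_type]
          refine Finset.sum_congr rfl fun a _ => ?_
          rw [Fintype.sum_prod_type]
          refine Finset.sum_congr rfl fun b' _ => ?_
          rw [Fintype.sum_prod_type]
      _ = ∑ q : Fin n × Fin n × Fin n × Fin n, ∑ r : Fin n → Fin B, ∑ s : Fin n → Bool,
            phi r s q.1 q.2.2.2 * G q.2.2.2 q.2.2.1 * phi r s q.2.2.1 q.2.1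
              * G q.2.1 q.1 := by
          rw [show (∑ r : Fin n → Fin B, ∑ s : Fin n → Bool,
              ∑ q : Fin n × Fin n × Fin n × Fin n,
                phi r s q.1 q.2.2.2 * G q.2.2.2 q.2.2.1 * phi r s q.2.2.1 q.2.1
                  * G q.2.1 q.1)
              = ∑ r : Fin n → Fin B, ∑ q : Fin n × Fin n × Fin n × Fin n,
                  ∑ s : Fin n → Bool,
                    phi r s q.1 q.2.2.2 * G q.2.2.2 q.2.2.1 * phi r s q.2.2.1 q.2.1
                      * G q.2.1 q.1 from
            Finset.sum_congr rfl fun r _ => Finset.sum_comm]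
          exact Finset.sum_comm
      _ = ∑ q : Fin n × Fin n × Fin n × Fin n,
            (if q.1 ≠ q.2.2.2 ∧ ((q.2.2.1 = q.1 ∧ q.2.1 = q.2.2.2)
                ∨ (q.2.2.1 = q.2.2.2 ∧ q.2.1 = q.1)) then K else 0)
              * (G q.2.2.2 q.2.2.1 * G q.2.1 q.1) := by
          refine Finset.sum_congr rfl fun q _ => ?_
          rw [show (∑ r : Fin n → Fin B, ∑ s : Fin n → Bool,
              phi r s q.1 q.2.2.2 * G q.2.2.2 q.2.2.1 * phi r s q.2.2.1 q.2.1
                * G q.2.1 q.1)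
              = (∑ r : Fin n → Fin B, ∑ s : Fin n → Bool,
                  phi r s q.1 q.2.2.2 * phi r s q.2.2.1 q.2.1)
                * (G q.2.2.2 q.2.2.1 * G q.2.1 q.1) by
            rw [Finset.sum_mul]
            refine Finset.sum_congr rfl fun r _ => ?_
            rw [Finset.sum_mul]
            refine Finset.sum_congr rfl fun s _ => ?_
            ring]
          rw [tuple_sum, ← hK]
      _ = ∑ a, ∑ b', ∑ a', ∑ b : Fin n,
            (if a ≠ b ∧ ((a' = a ∧ b' = b) ∨ (a' = b ∧ b' = a)) then K else 0)
              * (G b a' * G b' a) := by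
          rw [Fintype.sum_prod_type]
          refine Finset.sum_congr rfl fun a _ => ?_
          rw [Fintype.sum_prod_type]
          refine Finset.sum_congr rfl fun b' _ => ?_
          rw [Fintype.sum_prod_type]
      _ = ∑ a, ∑ b : Fin n, (if a = b then 0 else K * (G b a * G b a + G b b * G a a)) :=
          eval_fourfold G K
  rw [hnum]
  -- bound the double sum
  have hfull1 : (∑ a, ∑ b : Fin n, G b a * G b a) = (d:ℝ) := by
    have h1 : ∀ a b : Fin n, G b a * G b a = G a b * G b a := fun a b => by rw [hGs a b]
    calc (∑ a, ∑ b : Fin n, G b a * G b a)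
        = ∑ a, ∑ b : Fin n, G a b * G b a :=
          Finset.sum_congr rfl fun a _ => Finset.sum_congr rfl fun b _ => h1 a b
      _ = trace (G * G) := by
          rw [Matrix.trace]
          simp only [Matrix.diag, Matrix.mul_apply]
      _ = (d:ℝ) := by rw [hGG, htrG]
  have hfull2 : (∑ a, ∑ b : Fin n, G b b * G a a) = (d:ℝ) * d := by
    have htr' : (∑ a : Fin n, G a a) = (d:ℝ) := htrG
    calc (∑ a, ∑ b : Fin n, G b b * G a a)
        = ∑ a : Fin n, (∑ b : Fin n, G b b) * G a a := by
          refine Finset.sum_congr rfl fun a _ => ?_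
          rw [Finset.sum_mul]
      _ = (∑ b : Fin n, G b b) * ∑ a : Fin n, G a a := by rw [← Finset.mul_sum]
      _ = (d:ℝ) * d := by rw [htr']
  have hS2 : (∑ a, ∑ b : Fin n, (if a = b then 0 else G b a * G b a + G b b * G a a))
      ≤ (d:ℝ) + (d:ℝ) * d := by
    have hle : (∑ a, ∑ b : Fin n, (if a = b then 0 else G b a * G b a + G b b * G a a))
        ≤ ∑ a, ∑ b : Fin n, (G b a * G b a + G b b * G a a) := by
      refine Finset.sum_le_sum fun a _ => Finset.sum_le_sum fun b _ => ?_
      split_ifs with h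
      · exact add_nonneg (mul_self_nonneg _) (mul_nonneg (hdiag b) (hdiag a))
      · exact le_refl _
    calc (∑ a, ∑ b : Fin n, (if a = b then 0 else G b a * G b a + G b b * G a a))
        ≤ ∑ a, ∑ b : Fin n, (G b a * G b a + G b b * G a a) := hle
      _ = (∑ a, ∑ b : Fin n, G b a * G b a) + ∑ a, ∑ b : Fin n, G b b * G a a := by
          rw [← Finset.sum_add_distrib]
          exact Finset.sum_congr rfl fun a _ => Finset.sum_add_distrib
      _ = (d:ℝ) + (d:ℝ) * d := by rw [hfull1, hfull2]
  -- pull K out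
  have hfact : (∑ a, ∑ b : Fin n, (if a = b then 0 else K * (G b a * G b a + G b b * G a a)))
      = K * ∑ a, ∑ b : Fin n, (if a = b then 0 else G b a * G b a + G b b * G a a) := by
    rw [Finset.mul_sum]
    refine Finset.sum_congr rfl fun a _ => ?_
    rw [Finset.mul_sum]
    refine Finset.sum_congr rfl fun b _ => ?_
    split_ifs with h
    · rw [mul_zero]
    · rfl
  rw [hfact]
  have hpow : (0:ℝ) < (B:ℝ)^n * 2^n := by positivity
  have hKdiv : K / ((B:ℝ)^n * 2^n) = 1 / B := by
    rw [hK]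
    field_simp
  have hdd : (d:ℝ) + (d:ℝ) * d ≤ 2 * (d:ℝ)^2 := by
    have : (d:ℝ) ≤ (d:ℝ)^2 := by
      have := Nat.le_self_pow (two_ne_zero) d
      exact_mod_cast this
    nlinarith
  have hS2nonneg : (0:ℝ) ≤ ∑ a, ∑ b : Fin n,
      (if a = b then 0 else G b a * G b a + G b b * G a a) := by
    refine Finset.sum_nonneg fun a _ => Finset.sum_nonneg fun b _ => ?_
    split_ifs with h
    · exact le_refl 0
    · exact add_nonneg (mul_self_nonneg _) (mul_nonneg (hdiag b) (hdiag a))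
  calc K * (∑ a, ∑ b : Fin n, (if a = b then 0 else G b a * G b a + G b b * G a a))
        / ((B:ℝ)^n * 2^n)
      = (K / ((B:ℝ)^n * 2^n))
          * ∑ a, ∑ b : Fin n, (if a = b then 0 else G b a * G b a + G b b * G a a) := by
        ring
    _ = (∑ a, ∑ b : Fin n, (if a = b then 0 else G b a * G b a + G b b * G a a)) / B := by
        rw [hKdiv]; ring
    _ ≤ ((d:ℝ) + (d:ℝ) * d) / B := by gcongr
    _ ≤ 2 * (d:ℝ)^2 / B := by gcongr
end

section
/- Suppose R ∈ R^{d×r} satisfies ‖V^T V − V^T R R^T V‖_2 ≤ ε for ε ∈ (0, 1/2], where V ∈ R^{d×ρ} has orthonormal columns (right singular vectors of X). Let Z_opt = max over 0 ≤ α ≤ C of 1^Tα − (1/2)α^T Y X X^T Y α and Z̃_opt the analogous optimum with X replaced by XR. Then (1 − ε)·Z_opt ≤ Z̃_opt and Z_opt ≥ (1 − ε/(1−ε))·Z̃_opt; consequently the SVM margins γ*, γ̃* with Z_opt = 1/(2γ*²), Z̃_opt = 1/(2γ̃*²) satisfy (1 − ε/(1−ε))·γ*² ≤ γ̃*² ≤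 γ*²/(1 − ε). -/
open Matrix
open scoped Matrix.Norms.L2Operator

private lemma dot_tmul (m n : ℕ) (A : Matrix (Fin m) (Fin n) ℝ) (α : Fin n → ℝ) :
    α ⬝ᵥ (Aᵀ * A).mulVec α = A.mulVec α ⬝ᵥ A.mulVec α := by
  rw [← mulVec_mulVec, Matrix.dotProduct_mulVec, ← mulVec_transpose, transpose_transpose]

private lemma quad_bound (n : ℕ) (E : Matrix (Fin n) (Fin n) ℝ) (u : Fin n → ℝ) :
    |u ⬝ᵥ E.mulVec u| ≤ ‖E‖ * (u ⬝ᵥ u) := by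
  set u' : EuclideanSpace ℝ (Fin n) := (WithLp.equiv 2 _).symm u
  set v' : EuclideanSpace ℝ (Fin n) := (WithLp.equiv 2 _).symm (E.mulVec u)
  have h1 : u ⬝ᵥ E.mulVec u = inner ℝ u' v' := by
    rw [dotProduct_comm]; rfl
  have h2 : ‖v'‖ ≤ ‖E‖ * ‖u'‖ := E.l2_opNorm_mulVec u'
  have h3 : u ⬝ᵥ u = ‖u'‖ ^ 2 := by
    rw [← real_inner_self_eq_norm_sq]; rfl
  have h4 := abs_real_inner_le_norm u' v'
  have h5 : (0:ℝ) ≤ ‖u'‖ := norm_nonneg _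
  rw [h1, h3]
  calc |inner ℝ u' v'| ≤ ‖u'‖ * ‖v'‖ := h4
    _ ≤ ‖u'‖ * (‖E‖ * ‖u'‖) := mul_le_mul_of_nonneg_left h2 h5
    _ = ‖E‖ * ‖u'‖ ^ 2 := by ring

/-- nonnegativity of the quadratic form `u ⬝ᵥ u`. -/
private lemma dot_self_nonneg (n : ℕ) (u : Fin n → ℝ) : 0 ≤ u ⬝ᵥ u :=
  Finset.sum_nonneg fun i _ => mul_self_nonneg (u i)

/-- The scalar optimality lemma: if `t•a` is always dominated, then `Q ≤ S`. -/
private lemma Q_le_S (S Q Z : ℝ) (hS0 : 0 ≤ S) (hQ0 : 0 ≤ Q)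
    (hZe : Z = S - 1/2 * Q)
    (hle : ∀ t : ℝ, 0 ≤ t → t ≤ 1 → t * S - 1/2 * (t ^ 2 * Q) ≤ Z) :
    Q ≤ S := by
  by_contra hc
  push_neg at hc
  have hQpos : 0 < Q := lt_of_le_of_lt hS0 hc
  have ht := hle (S / Q) (div_nonneg hS0 hQpos.le) (le_of_lt ((div_lt_one hQpos).mpr hc))
  rw [hZe] at ht
  have h1 : S / Q * S - 1/2 * ((S/Q)^2 * Q) = S^2 / (2*Q) := by field_simp; ring
  rw [h1] at ht
  rw [div_le_iff₀ (by positivity)] at ht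
  nlinarith [sq_nonneg (S - Q)]

set_option maxHeartbeats 1000000 in
/-- SVM margin preservation under projection: if `‖VᵀV − VᵀRRᵀV‖₂ ≤ ε` with `ε ∈ (0, 1/2]`,
`V` the orthonormal right singular vectors of the data matrix `X` (so `XVVᵀ = X`), and
`Z_opt`, `Z̃_opt` are the optima of the dual SVM objectives for `X` and `XR`, then
`(1 − ε)·Z_opt ≤ Z̃_opt` and `Z_opt ≥ (1 − ε/(1−ε))·Z̃_opt`; consequently the margins
`γ*, γ̃*` with `Z_opt = 1/(2γ*²)`, `Z̃_opt = 1/(2γ̃*²)` satisfy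
`(1 − ε/(1−ε))·γ*² ≤ γ̃*²` and `γ̃*² ≤ γ*²/(1 − ε)`. -/
theorem svm_margin_preservation (N d r ρ : ℕ)
    (X : Matrix (Fin N) (Fin d) ℝ) (R : Matrix (Fin d) (Fin r) ℝ)
    (V : Matrix (Fin d) (Fin ρ) ℝ) (y : Fin N → ℝ)
    (hy : ∀ i, y i = 1 ∨ y i = -1)
    (C ε : ℝ) (hε0 : 0 < ε) (hε : ε ≤ 1 / 2)
    (hV : Vᵀ * V = 1) (hXV : X * V * Vᵀ = X)
    (hR : ‖Vᵀ * V - Vᵀ * R * Rᵀ * V‖ ≤ ε)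
    (Zopt Ztopt : ℝ)
    (hZ : IsGreatest {z : ℝ | ∃ α : Fin N → ℝ, (∀ i, 0 ≤ α i ∧ α i ≤ C) ∧
        z = (∑ i, α i) - (1 / 2) *
          (α ⬝ᵥ ((Matrix.diagonal y * X * Xᵀ * Matrix.diagonal y).mulVec α))} Zopt)
    (hZt : IsGreatest {z : ℝ | ∃ α : Fin N → ℝ, (∀ i, 0 ≤ α i ∧ α i ≤ C) ∧
        z = (∑ i, α i) - (1 / 2) *
          (α ⬝ᵥ ((Matrix.diagonal y * (X * R) * (X * R)ᵀ * Matrix.diagonal y).mulVec α))} Ztopt)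
    (γ γt : ℝ) (hγ : 0 < γ) (hγt : 0 < γt)
    (hZγ : Zopt = 1 / (2 * γ ^ 2)) (hZtγ : Ztopt = 1 / (2 * γt ^ 2)) :
    (1 - ε) * Zopt ≤ Ztopt ∧ (1 - ε / (1 - ε)) * Ztopt ≤ Zopt ∧
      (1 - ε / (1 - ε)) * γ ^ 2 ≤ γt ^ 2 ∧ γt ^ 2 ≤ γ ^ 2 / (1 - ε) := by
  have hε1 : ε < 1 := lt_of_le_of_lt hε (by norm_num)
  set Y := Matrix.diagonal y with hY
  set A : Matrix (Fin d) (Fin N) ℝ := Xᵀ * Y with hA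
  have hYt : Yᵀ = Y := diagonal_transpose y
  have hXt : Xᵀ = V * (Vᵀ * Xᵀ) := by
    calc Xᵀ = (X * V * Vᵀ)ᵀ := by rw [hXV]
      _ = V * (Vᵀ * Xᵀ) := by
          simp only [Matrix.transpose_mul, transpose_transpose, Matrix.mul_assoc]
  set Qf : (Fin N → ℝ) → ℝ := fun a => a ⬝ᵥ ((Y * X * Xᵀ * Y).mulVec a) with hQf
  set Qt : (Fin N → ℝ) → ℝ := fun a => a ⬝ᵥ ((Y * (X * R) * (X * R)ᵀ * Y).mulVec a) with hQt
  have hM1 : Y * X * Xᵀ * Y = Aᵀ * A := by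
    rw [hA]
    simp only [Matrix.transpose_mul, transpose_transpose, hYt, Matrix.mul_assoc]
  have hM2 : Y * (X * R) * (X * R)ᵀ * Y = (Rᵀ * A)ᵀ * (Rᵀ * A) := by
    rw [hA]
    simp only [Matrix.transpose_mul, transpose_transpose, hYt, Matrix.mul_assoc]
  -- the key bounds on the quadratic forms
  have key : ∀ a : Fin N → ℝ, 0 ≤ Qf a ∧ |Qf a - Qt a| ≤ ε * Qf a := by
    intro a
    set u : Fin ρ → ℝ := (Vᵀ * A).mulVec a with hu
    have hAV : A = V * (Vᵀ * A) := by
      rw [hA]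
      conv_lhs => rw [hXt]
      simp only [Matrix.mul_assoc]
    have hAa : A.mulVec a = V.mulVec u := by
      rw [hu, mulVec_mulVec]
      conv_lhs => rw [hAV]
    have hQfa : Qf a = u ⬝ᵥ u := by
      show a ⬝ᵥ (Y * X * Xᵀ * Y).mulVec a = u ⬝ᵥ u
      rw [hM1, dot_tmul, hAa,
        show V.mulVec u ⬝ᵥ V.mulVec u = u ⬝ᵥ (Vᵀ * V).mulVec u from (dot_tmul d ρ V u).symm]
      rw [hV, one_mulVec]
    have hQta : Qt a = u ⬝ᵥ (Vᵀ * (R * (Rᵀ * V))).mulVec u := by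
      show a ⬝ᵥ (Y * (X * R) * (X * R)ᵀ * Y).mulVec a = _
      rw [hM2, dot_tmul]
      have h5 : (Rᵀ * A).mulVec a = (Rᵀ * V).mulVec u := by
        rw [← mulVec_mulVec, hAa, mulVec_mulVec]
      rw [h5, show (Rᵀ * V).mulVec u ⬝ᵥ (Rᵀ * V).mulVec u
          = u ⬝ᵥ ((Rᵀ * V)ᵀ * (Rᵀ * V)).mulVec u from (dot_tmul r ρ (Rᵀ * V) u).symm]
      simp only [Matrix.transpose_mul, transpose_transpose, Matrix.mul_assoc]
    have hdiff : Qf a - Qt a = u ⬝ᵥ (Vᵀ * V - Vᵀ * R * Rᵀ * V).mulVec u := by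
      rw [hQfa, hQta, Matrix.sub_mulVec, dotProduct_sub, hV, one_mulVec]
      simp only [Matrix.mul_assoc]
    have hbound := quad_bound ρ (Vᵀ * V - Vᵀ * R * Rᵀ * V) u
    have hnonneg : 0 ≤ u ⬝ᵥ u := dot_self_nonneg ρ u
    refine ⟨hQfa ▸ hnonneg, ?_⟩
    rw [hdiff, hQfa]
    exact le_trans hbound (mul_le_mul_of_nonneg_right hR hnonneg)
  -- extract optimizers
  obtain ⟨⟨α, hαf, hαe⟩, hub⟩ := hZ
  obtain ⟨⟨β, hβf, hβe⟩, htub⟩ := hZt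
  have hαe' : Zopt = (∑ i, α i) - 1/2 * Qf α := hαe
  have hβe' : Ztopt = (∑ i, β i) - 1/2 * Qt β := hβe
  -- scaling of the quadratic form
  have hscale : ∀ (Q' : Matrix (Fin N) (Fin N) ℝ) (t : ℝ) (a : Fin N → ℝ),
      (t • a) ⬝ᵥ Q'.mulVec (t • a) = t ^ 2 * (a ⬝ᵥ Q'.mulVec a) := by
    intro Q' t a
    rw [mulVec_smul, dotProduct_smul, smul_dotProduct, smul_eq_mul, smul_eq_mul]
    ring
  -- feasibility of scaled vectors
  have hfeasScale : ∀ (a : Fin N → ℝ), (∀ i, 0 ≤ a i ∧ a i ≤ C) →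
      ∀ t : ℝ, 0 ≤ t → t ≤ 1 → ∀ i, 0 ≤ (t • a) i ∧ (t • a) i ≤ C := by
    intro a hf t ht0 ht1 i
    refine ⟨mul_nonneg ht0 (hf i).1,
      le_trans (mul_le_of_le_one_left (hf i).1 ht1) (hf i).2⟩
  have hsum : ∀ (a : Fin N → ℝ) (t : ℝ), (∑ i, (t • a) i) = t * ∑ i, a i := by
    intro a t
    simp [Finset.mul_sum]
  have hSα0 : 0 ≤ ∑ i, α i := Finset.sum_nonneg fun i _ => (hαf i).1
  have hSβ0 : 0 ≤ ∑ i, β i := Finset.sum_nonneg fun i _ => (hβf i).1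
  have habsα := abs_le.mp (key α).2
  have habsβ := abs_le.mp (key β).2
  have hQα0 := (key α).1
  have hQβ0 := (key β).1
  have hQtα0 : 0 ≤ Qt α := by nlinarith
  have hQtβ0 : 0 ≤ Qt β := by nlinarith
  -- Qf α ≤ S α
  have hQSα : Qf α ≤ ∑ i, α i := by
    refine Q_le_S _ _ Zopt hSα0 hQα0 hαe' ?_
    intro t ht0 ht1
    have hmem := hub ⟨t • α, hfeasScale α hαf t ht0 ht1, rfl⟩
    rw [hsum, hscale] at hmem
    convert hmem using 2 <;> ring
  -- Qt β ≤ S β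
  have hQSβ : Qt β ≤ ∑ i, β i := by
    refine Q_le_S _ _ Ztopt hSβ0 hQtβ0 hβe' ?_
    intro t ht0 ht1
    have hmem := htub ⟨t • β, hfeasScale β hβf t ht0 ht1, rfl⟩
    rw [hsum, hscale] at hmem
    convert hmem using 2 <;> ring
  -- first inequality
  have h1 : (1 - ε) * Zopt ≤ Ztopt := by
    have hle := htub ⟨α, hαf, rfl⟩
    have hle' : (∑ i, α i) - 1/2 * Qt α ≤ Ztopt := by
      exact hle
    have hq2 : Qf α / 2 ≤ Zopt := by rw [hαe']; linarith
    have hub2 : Qt α ≤ Qf α + ε * Qf α := by linarith [habsα.1]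
    have hZopt0 : 0 < Zopt := by rw [hZγ]; positivity
    calc (1 - ε) * Zopt = Zopt - ε * Zopt := by ring
      _ ≤ Zopt - ε * (Qf α / 2) := by nlinarith
      _ = (∑ i, α i) - 1/2 * Qf α - ε/2 * Qf α := by rw [hαe']; ring
      _ ≤ (∑ i, α i) - 1/2 * Qt α := by linarith
      _ ≤ Ztopt := hle'
  -- second inequality
  have h2 : (1 - ε / (1 - ε)) * Ztopt ≤ Zopt := by
    have hle := hub ⟨β, hβf, rfl⟩
    have hle' : (∑ i, β i) - 1/2 * Qf β ≤ Zopt := by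
      exact hle
    have hqt2 : Qt β / 2 ≤ Ztopt := by rw [hβe']; linarith
    have hfb : (1 - ε) * Qf β ≤ Qt β := by linarith [habsβ.1]
    have h1ε : (0:ℝ) < 1 - ε := by linarith
    have hfb2 : Qf β ≤ Qt β / (1 - ε) := by
      rw [le_div_iff₀ h1ε]; linarith
    have hεd : 0 ≤ ε / (1 - ε) := div_nonneg hε0.le h1ε.le
    have hZtopt0 : 0 < Ztopt := by rw [hZtγ]; positivity
    calc (1 - ε / (1 - ε)) * Ztopt = Ztopt - ε / (1 - ε) * Ztopt := by ring
      _ ≤ Ztopt - ε / (1 - ε) * (Qt β / 2) := by nlinarith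
      _ = (∑ i, β i) - 1/2 * Qt β - ε / (1 - ε) * (Qt β / 2) := by rw [hβe']
      _ = (∑ i, β i) - 1/2 * (Qt β / (1 - ε)) := by field_simp; ring
      _ ≤ (∑ i, β i) - 1/2 * Qf β := by linarith
      _ ≤ Zopt := hle'
  refine ⟨h1, h2, ?_, ?_⟩
  · have h2' := h2
    rw [hZγ, hZtγ, mul_one_div, div_le_div_iff₀ (by positivity) (by positivity)] at h2'
    nlinarith
  · have h1' := h1
    rw [hZγ, hZtγ, mul_one_div, div_le_div_iff₀ (by positivity) (by positivity)] at h1'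
    rw [le_div_iff₀ (by linarith)]
    nlinarith
end
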